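/- The function I(ν) = (1/π) ∫_{-π}^{π} d(φ, ν) sin^2 φ dφ, where d(φ, ν) = -(cos φ + ν/2) - sqrt((cos φ + ν/2)^2 - 1) for ν < -4, is strictly increasing on (-∞, -4), tends to 0 as ν → -∞, and tends to 2(1 - 8/(3π)) as ν → -4⁻. Consequently, for every r with 0 < r < 2(1 - 8/(3π)), the equation I(ν) = r has a unique solution ν < -4. -/

import Mathlib

noncomputable def d (φ ν : ℝ) : ℝ :=
  -(Real.cos φ + ν/2) - Real.sqrt ((Real.cos φ + ν/2)^2 - 1)

noncomputable def I (ν : ℝ) : ℝ :=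
  (1/Real.pi) * ∫ φ in (-Real.pi)..Real.pi, d φ ν * (Real.sin φ)^2

open Real Filter Set

lemma g_mul {x : ℝ} (hx : x ≤ -1) :
    (-x - Real.sqrt (x^2-1)) * (-x + Real.sqrt (x^2-1)) = 1 := by
  have h0 : (0:ℝ) ≤ x^2 - 1 := by nlinarith
  have h := Real.sq_sqrt h0
  nlinarith [h]

lemma h_pos {x : ℝ} (hx : x ≤ -1) : (0:ℝ) < -x + Real.sqrt (x^2-1) := by
  nlinarith [Real.sqrt_nonneg (x^2-1)]

lemma g_eq {x : ℝ} (hx : x ≤ -1) :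
    -x - Real.sqrt (x^2-1) = 1 / (-x + Real.sqrt (x^2-1)) := by
  rw [eq_div_iff (h_pos hx).ne']
  exact g_mul hx

lemma g_strictMono {x y : ℝ} (hxy : x < y) (hy : y ≤ -1) :
    -x - Real.sqrt (x^2-1) < -y - Real.sqrt (y^2-1) := by
  have hx : x ≤ -1 := by linarith
  rw [g_eq hx, g_eq hy]
  apply one_div_lt_one_div_of_lt (h_pos hy)
  have : Real.sqrt (y^2-1) ≤ Real.sqrt (x^2-1) := Real.sqrt_le_sqrt (by nlinarith)
  linarith

lemma g_pos {x : ℝ} (hx : x ≤ -1) : 0 < -x - Real.sqrt (x^2-1) := by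
  rw [g_eq hx]; exact one_div_pos.mpr (h_pos hx)

lemma g_le_inv {x : ℝ} (hx : x ≤ -1) : -x - Real.sqrt (x^2-1) ≤ 1 / (-x) := by
  rw [g_eq hx]
  apply one_div_le_one_div_of_le (by linarith)
  nlinarith [Real.sqrt_nonneg (x^2-1)]

lemma cos_add_le {φ ν : ℝ} (hν : ν < -4) : Real.cos φ + ν/2 ≤ -1 := by
  nlinarith [Real.cos_le_one φ]

lemma d_lt_d {φ ν₁ ν₂ : ℝ} (h12 : ν₁ < ν₂) (h2 : ν₂ < -4) : d φ ν₁ < d φ ν₂ :=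
  g_strictMono (by linarith) (cos_add_le h2)

lemma d_abs_le {φ ν : ℝ} (hν : ν < -4) : |d φ ν| ≤ 1 / (-1 - ν/2) := by
  have hx : Real.cos φ + ν/2 ≤ -1 := cos_add_le hν
  unfold d
  rw [abs_of_pos (g_pos hx)]
  calc -(Real.cos φ + ν/2) - Real.sqrt ((Real.cos φ + ν/2)^2-1) ≤ 1 / (-(Real.cos φ + ν/2)) := g_le_inv hx
    _ ≤ 1 / (-1 - ν/2) := by
        apply one_div_le_one_div_of_le (by linarith)
        nlinarith [Real.cos_le_one φ]

lemma cont_integrand (ν : ℝ) : Continuous fun φ => d φ ν * Real.sin φ ^ 2 := by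
  unfold d; fun_prop

lemma I_cont : Continuous I := by
  unfold I
  apply continuous_const.mul
  exact intervalIntegral.continuous_parametric_intervalIntegral_of_continuous'
    (f := fun ν φ => d φ ν * Real.sin φ ^ 2) (by unfold d Function.uncurry; fun_prop) _ _

lemma I_mono : StrictMonoOn I (Set.Iio (-4:ℝ)) := by
  intro ν₁ _ ν₂ h2 h12
  unfold I
  have hπ := Real.pi_pos
  apply mul_lt_mul_of_pos_left _ (by positivity)
  apply intervalIntegral.integral_lt_integral_of_continuousOn_of_le_of_exists_lt
    (by linarith) (cont_integrand ν₁).continuousOn (cont_integrand ν₂).continuousOn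
  · intro x _
    exact mul_le_mul_of_nonneg_right (d_lt_d h12 h2).le (sq_nonneg _)
  · refine ⟨Real.pi/2, ⟨by linarith, by linarith⟩, ?_⟩
    simpa [Real.sin_pi_div_two] using d_lt_d (φ := Real.pi/2) h12 h2

lemma I_atBot : Tendsto I atBot (nhds 0) := by
  have hπ := Real.pi_pos
  apply squeeze_zero_norm' (a := fun ν : ℝ => 2 / (-1 - ν/2))
  · filter_upwards [eventually_lt_atBot (-4:ℝ)] with ν hν
    have hC : (0:ℝ) < -1 - ν/2 := by linarith
    have key : ‖∫ φ in (-Real.pi)..Real.pi, d φ ν * Real.sin φ ^ 2‖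
        ≤ (1 / (-1 - ν/2)) * |Real.pi - (-Real.pi)| := by
      apply intervalIntegral.norm_integral_le_of_norm_le_const
      intro x _
      rw [Real.norm_eq_abs, abs_mul]
      calc |d x ν| * |Real.sin x ^ 2| ≤ (1/(-1-ν/2)) * 1 := by
            apply mul_le_mul (d_abs_le hν) ?_ (abs_nonneg _) (by positivity)
            rw [abs_of_nonneg (sq_nonneg _)]
            nlinarith [Real.neg_one_le_sin x, Real.sin_le_one x]
        _ = 1/(-1-ν/2) := mul_one _
    have habs : |Real.pi - (-Real.pi)| = 2 * Real.pi := by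
      rw [abs_of_pos (by linarith)]; ring
    rw [habs] at key
    show ‖(1/Real.pi) * ∫ φ in (-Real.pi)..Real.pi, d φ ν * Real.sin φ ^ 2‖ ≤ _
    rw [norm_mul, Real.norm_eq_abs (1/Real.pi), abs_of_pos (by positivity)]
    calc (1/Real.pi) * ‖∫ φ in (-Real.pi)..Real.pi, d φ ν * Real.sin φ ^ 2‖
        ≤ (1/Real.pi) * ((1/(-1-ν/2)) * (2*Real.pi)) := by
          exact mul_le_mul_of_nonneg_left key (by positivity)
      _ = 2 / (-1 - ν/2) := by
          have h2 : (-1 - ν/2) ≠ 0 := ne_of_gt hC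
          have h3 : Real.pi ≠ 0 := ne_of_gt hπ
          field_simp
  · have h1 : Tendsto (fun ν : ℝ => -1 - ν/2) atBot atTop := by
      have h0 : Tendsto (fun ν : ℝ => -ν) atBot atTop := tendsto_neg_atBot_atTop
      have h0' : Tendsto (fun ν : ℝ => -ν/2) atBot atTop := h0.atTop_div_const (by norm_num)
      have h0'' := tendsto_atTop_add_const_left atBot (-1 : ℝ) h0'
      simpa [sub_eq_add_neg, neg_div] using h0''
    have := (tendsto_inv_atTop_zero.comp h1).const_mul (2:ℝ)
    simpa [Function.comp, div_eq_mul_inv] using this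

lemma hasDerivAt_mul_sqrt (t : ℝ) :
    HasDerivAt (fun s => s * Real.sqrt s) (3/2 * Real.sqrt t) t := by
  rcases lt_trichotomy t 0 with h|h|h
  · have hz : Real.sqrt t = 0 := Real.sqrt_eq_zero_of_nonpos h.le
    rw [hz, mul_zero]
    apply (hasDerivAt_const t (0:ℝ)).congr_of_eventuallyEq
    filter_upwards [eventually_lt_nhds h] with s hs
    rw [Real.sqrt_eq_zero_of_nonpos hs.le, mul_zero]
  · subst h
    rw [Real.sqrt_zero, mul_zero, hasDerivAt_iff_tendsto_slope]
    have heq : slope (fun s => s * Real.sqrt s) 0 =ᶠ[nhdsWithin 0 {(0:ℝ)}ᶜ] Real.sqrt := by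
      filter_upwards [self_mem_nhdsWithin] with s hs
      have hs' : s ≠ 0 := hs
      simp [slope, hs', mul_comm, mul_div_assoc, div_self hs']
    rw [tendsto_congr' heq]
    have h2 : Tendsto Real.sqrt (nhdsWithin 0 {(0:ℝ)}ᶜ) (nhds (Real.sqrt 0)) :=
      (Real.continuous_sqrt.tendsto 0).mono_left nhdsWithin_le_nhds
    simpa using h2
  · have h1 := (hasDerivAt_id t).mul (Real.hasDerivAt_sqrt h.ne')
    refine h1.congr_deriv ?_
    have hs : Real.sqrt t ^ 2 = t := Real.sq_sqrt h.le
    have hsp : 0 < Real.sqrt t := Real.sqrt_pos.mpr h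
    field_simp
    nlinarith [hs, id_eq t]

noncomputable def Bfun (φ : ℝ) : ℝ := Real.sqrt ((Real.cos φ - 2)^2 - 1) * Real.sin φ ^ 2

lemma Bfun_cont : Continuous Bfun := by unfold Bfun; fun_prop

lemma hasDerivAt_F (φ : ℝ) :
    HasDerivAt (fun x => -(1/3) * ((1+Real.cos x)*(3-Real.cos x)
        * Real.sqrt ((1+Real.cos x)*(3-Real.cos x))))
      (Real.sin φ * (1 - Real.cos φ) * Real.sqrt ((1+Real.cos φ)*(3-Real.cos φ))) φ := by
  have h1 : HasDerivAt (fun x : ℝ => 1 + Real.cos x) (-Real.sin φ) φ :=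
    (Real.hasDerivAt_cos φ).const_add 1
  have h2 : HasDerivAt (fun x : ℝ => 3 - Real.cos x) (Real.sin φ) φ := by
    simpa using (Real.hasDerivAt_cos φ).const_sub 3
  have hu : HasDerivAt (fun x : ℝ => (1+Real.cos x)*(3-Real.cos x))
      (-2*Real.sin φ*(1-Real.cos φ)) φ := by
    exact (h1.mul h2).congr_deriv (by ring)
  have h3 := ((hasDerivAt_mul_sqrt ((1+Real.cos φ)*(3-Real.cos φ))).comp φ hu).const_mul
    (-(1/3) : ℝ)
  simp only [Function.comp] at h3
  exact h3.congr_deriv (by ring)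

lemma Bfun_eq {φ : ℝ} (h0 : 0 ≤ Real.sin φ) :
    Bfun φ = Real.sin φ * (1 - Real.cos φ) * Real.sqrt ((1+Real.cos φ)*(3-Real.cos φ)) := by
  unfold Bfun
  have hc1 : -1 ≤ Real.cos φ := Real.neg_one_le_cos φ
  have hc2 : Real.cos φ ≤ 1 := Real.cos_le_one φ
  set c := Real.cos φ with hc
  have hsin : Real.sin φ = Real.sqrt ((1-c)*(1+c)) := by
    rw [← Real.sqrt_sq h0]
    congr 1
    have hpyth := Real.sin_sq_add_cos_sq φ
    rw [← hc] at hpyth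
    nlinarith
  have h1 : (c-2)^2 - 1 = (1-c)*(3-c) := by ring
  rw [h1, hsin, Real.sqrt_mul (by linarith : (0:ℝ) ≤ 1-c),
    Real.sqrt_mul (by linarith : (0:ℝ) ≤ 1-c), Real.sqrt_mul (by linarith : (0:ℝ) ≤ 1+c)]
  have e1 : Real.sqrt (1-c) * Real.sqrt (1-c) = 1-c :=
    Real.mul_self_sqrt (by linarith)
  have e2 : Real.sqrt (1+c) * Real.sqrt (1+c) = 1+c :=
    Real.mul_self_sqrt (by linarith)
  linear_combination (Real.sqrt (1-c) * Real.sqrt (1+c)^2 * Real.sqrt (3-c)) * e1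

lemma integral_B_half : ∫ φ in (0:ℝ)..Real.pi, Bfun φ = 8/3 := by
  have hπ := Real.pi_pos
  rw [intervalIntegral.integral_congr
    (g := fun φ => Real.sin φ * (1-Real.cos φ) * Real.sqrt ((1+Real.cos φ)*(3-Real.cos φ)))
    (by
      intro x hx
      rw [Set.uIcc_of_le (by linarith : (0:ℝ) ≤ Real.pi)] at hx
      exact Bfun_eq (Real.sin_nonneg_of_nonneg_of_le_pi hx.1 hx.2))]
  rw [intervalIntegral.integral_eq_sub_of_hasDerivAt (fun x _ => hasDerivAt_F x)
    (by apply Continuous.intervalIntegrable; fun_prop)]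
  have h4 : Real.sqrt 4 = 2 := by
    rw [show (4:ℝ) = 2^2 by norm_num, Real.sqrt_sq (by norm_num)]
  simp [Real.cos_pi, Real.cos_zero]
  norm_num [h4]

lemma integral_B_full : ∫ φ in (-Real.pi)..Real.pi, Bfun φ = 16/3 := by
  have h1 : (∫ φ in (-Real.pi)..(0:ℝ), Bfun φ) = ∫ φ in (0:ℝ)..Real.pi, Bfun φ := by
    have : (∫ φ in (0:ℝ)..Real.pi, Bfun φ) = ∫ φ in (0:ℝ)..Real.pi, Bfun (-φ) := by
      apply intervalIntegral.integral_congr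
      intro x _
      unfold Bfun
      simp only [Real.cos_neg, Real.sin_neg]
      ring
    rw [this, intervalIntegral.integral_comp_neg]
    norm_num
  rw [← intervalIntegral.integral_add_adjacent_intervals
    (Bfun_cont.intervalIntegrable (-Real.pi) 0) (Bfun_cont.intervalIntegrable 0 Real.pi),
    h1, integral_B_half]
  norm_num

lemma integral_A_full :
    ∫ φ in (-Real.pi)..Real.pi, (2 - Real.cos φ) * Real.sin φ ^ 2 = 2 * Real.pi := by
  have hd : ∀ x : ℝ, HasDerivAt (fun x => x - Real.sin x * Real.cos x - Real.sin x ^ 3 / 3)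
      ((2 - Real.cos x) * Real.sin x ^ 2) x := by
    intro x
    have h1 := (Real.hasDerivAt_sin x).mul (Real.hasDerivAt_cos x)
    have h2 := ((Real.hasDerivAt_sin x).pow 3).div_const 3
    have h3 := ((hasDerivAt_id x).sub h1).sub h2
    refine h3.congr_deriv ?_
    have := Real.sin_sq_add_cos_sq x
    ring_nf
    nlinarith [this]
  rw [intervalIntegral.integral_eq_sub_of_hasDerivAt (fun x _ => hd x)
    (by apply Continuous.intervalIntegrable; fun_prop)]
  simp [Real.sin_pi]
  ring

lemma I_neg4 : I (-4) = 2 * (1 - 8/(3*Real.pi)) := by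
  have hπ := Real.pi_pos
  have h : (∫ φ in (-Real.pi)..Real.pi, d φ (-4) * Real.sin φ ^ 2)
      = (∫ φ in (-Real.pi)..Real.pi, (2 - Real.cos φ) * Real.sin φ ^ 2)
        - ∫ φ in (-Real.pi)..Real.pi, Bfun φ := by
    rw [← intervalIntegral.integral_sub
      (by apply Continuous.intervalIntegrable; fun_prop) (Bfun_cont.intervalIntegrable _ _)]
    apply intervalIntegral.integral_congr
    intro x _
    unfold d Bfun
    simp only
    rw [show (Real.cos x + (-4:ℝ)/2)^2 - 1 = (Real.cos x - 2)^2 - 1 by ring]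
    ring
  unfold I
  rw [h, integral_A_full, integral_B_full]
  field_simp
  ring

theorem I_properties :
    StrictMonoOn I (Set.Iio (-4 : ℝ)) ∧
    Filter.Tendsto I Filter.atBot (nhds 0) ∧
    Filter.Tendsto I (nhdsWithin (-4) (Set.Iio (-4 : ℝ)))
      (nhds (2 * (1 - 8/(3*Real.pi)))) ∧
    ∀ r : ℝ, 0 < r → r < 2 * (1 - 8/(3*Real.pi)) →
      ∃! ν : ℝ, ν < -4 ∧ I ν = r := by
  have h3 : Filter.Tendsto I (nhdsWithin (-4) (Set.Iio (-4 : ℝ)))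
      (nhds (2 * (1 - 8/(3*Real.pi)))) := by
    rw [← I_neg4]
    exact (I_cont.continuousAt).continuousWithinAt
  refine ⟨I_mono, I_atBot, h3, ?_⟩
  intro r hr0 hrL
  obtain ⟨ν₀, hν₀r, hν₀lt⟩ :=
    ((I_atBot.eventually_lt_const hr0).and (eventually_lt_atBot (-4:ℝ))).exists
  have hev1 : ∀ᶠ ν in nhdsWithin (-4) (Set.Iio (-4:ℝ)), r < I ν :=
    h3.eventually_const_lt hrL
  have hev2 : ∀ᶠ ν in nhdsWithin (-4) (Set.Iio (-4:ℝ)), ν ∈ Set.Iio (-4:ℝ) :=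
    eventually_mem_nhdsWithin
  have hev3 : ∀ᶠ ν in nhdsWithin (-4) (Set.Iio (-4:ℝ)), ν₀ < ν := by
    apply eventually_nhdsWithin_of_eventually_nhds
    exact eventually_gt_nhds hν₀lt
  obtain ⟨ν₁, hν₁r, hν₁lt, hν₀₁⟩ := (hev1.and (hev2.and hev3)).exists
  have hmem : r ∈ Set.Icc (I ν₀) (I ν₁) := ⟨hν₀r.le, hν₁r.le⟩
  obtain ⟨ν, hνmem, hνeq⟩ :=
    intermediate_value_Icc hν₀₁.le I_cont.continuousOn hmem
  have hνlt : ν < -4 := lt_of_le_of_lt hνmem.2 hν₁lt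
  refine ⟨ν, ⟨hνlt, hνeq⟩, ?_⟩
  rintro ν' ⟨hν'lt, hν'eq⟩
  exact I_mono.injOn hν'lt hνlt (hν'eq.trans hνeq.symm)
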